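/- Fix n ≥ 0 and let aₙ = 1/(2n+1)!!. Suppose P ∈ Ψ(R) with P₊ = 1 satisfies the Sato–Wilson equation D(P) = −(aₙ/h) · ( P (h∂)^{2n+1} P⁻¹ )₋ · P, and suppose that L := P · h²∂² · P⁻¹ satisfies L₋ = 0. Then, with 𝔏 := P (h∂)^{2n+1} P⁻¹, the Lax equation D(L) = (aₙ/h) [ 𝔏₊ , L ] holds, where [·,·] is the commutator in Ψ(R). -/

import Mathlib

open scoped BigOperators

/-- Generalized binomial coefficient `C(k,l) = k(k-1)⋯(k-l+1)/l!` for `k : ℤ`. -/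
def gbinom (k : ℤ) (l : ℕ) : ℚ :=
  (∏ i ∈ Finset.range l, ((k : ℚ) - i)) / (Nat.factorial l)

/-- Pseudo-differential operators (and symbols): coefficient functions `ℤ → R`
with support bounded above.  The parameter `d` (the derivation) determines the product. -/
structure PDO (R : Type) [CommRing R] [Algebra ℚ R] (d : R →+ R) where
  coeff : ℤ → R
  bdd : ∃ N : ℤ, ∀ n : ℤ, N < n → coeff n = 0

namespace PDO

variable {R : Type} [CommRing R] [Algebra ℚ R] {d : R →+ R}

theorem ext' {A B : PDO R d} (h : A.coeff = B.coeff) : A = B := by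
  cases A; cases B; cases h; rfl

set_option linter.unusedSectionVars false in
theorem iterD_zero (d : R →+ R) (j : ℕ) : d^[j] (0 : R) = 0 := by
  induction j with
  | zero => rfl
  | succ j ih => rw [Function.iterate_succ_apply', ih, map_zero]

instance : Zero (PDO R d) := ⟨⟨fun _ => 0, ⟨0, fun _ _ => rfl⟩⟩⟩

instance : One (PDO R d) :=
  ⟨⟨fun n => if n = 0 then 1 else 0, ⟨0, fun n hn => if_neg (by omega)⟩⟩⟩

instance : Add (PDO R d) :=
  ⟨fun A B => ⟨fun n => A.coeff n + B.coeff n, by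
    obtain ⟨N, hN⟩ := A.bdd
    obtain ⟨M, hM⟩ := B.bdd
    exact ⟨max N M, fun n hn => by
      show A.coeff n + B.coeff n = 0
      rw [hN n (lt_of_le_of_lt (le_max_left N M) hn),
        hM n (lt_of_le_of_lt (le_max_right N M) hn), add_zero]⟩⟩⟩

instance : Neg (PDO R d) :=
  ⟨fun A => ⟨fun n => -A.coeff n, by
    obtain ⟨N, hN⟩ := A.bdd
    exact ⟨N, fun n hn => by show -A.coeff n = 0; rw [hN n hn, neg_zero]⟩⟩⟩

instance : SMul ℚ (PDO R d) :=
  ⟨fun c A => ⟨fun n => c • A.coeff n, by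
    obtain ⟨N, hN⟩ := A.bdd
    exact ⟨N, fun n hn => by show c • A.coeff n = 0; rw [hN n hn, smul_zero]⟩⟩⟩

instance : AddCommGroup (PDO R d) where
  add := (· + ·)
  zero := 0
  neg := Neg.neg
  add_assoc A B C := ext' (funext fun n => add_assoc (A.coeff n) (B.coeff n) (C.coeff n))
  zero_add A := ext' (funext fun n => zero_add (A.coeff n))
  add_zero A := ext' (funext fun n => add_zero (A.coeff n))
  add_comm A B := ext' (funext fun n => add_comm (A.coeff n) (B.coeff n))
  neg_add_cancel A := ext' (funext fun n => neg_add_cancel (A.coeff n))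
  nsmul := nsmulRec
  zsmul := zsmulRec

/-- The product of pseudo-differential operators, determined by the commutation rule
`∂^k · f = Σ_{l ≥ 0} C(k,l) (∂^l f) ∂^(k-l)`. -/
noncomputable instance : Mul (PDO R d) :=
  ⟨fun A B =>
    ⟨fun n => ∑ᶠ (k : ℤ) (m : ℤ),
        if _ : 0 ≤ k + m - n then
          A.coeff k * (gbinom k (k + m - n).toNat • (d^[(k + m - n).toNat] (B.coeff m)))
        else 0, by
      obtain ⟨N, hN⟩ := A.bdd
      obtain ⟨M, hM⟩ := B.bdd
      refine ⟨N + M, fun n hn => ?_⟩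
      have hz : ∀ k m : ℤ,
          (if _ : 0 ≤ k + m - n then
            A.coeff k * (gbinom k (k + m - n).toNat • (d^[(k + m - n).toNat] (B.coeff m)))
          else 0) = 0 := by
        intro k m
        by_cases hl : 0 ≤ k + m - n
        · rw [dif_pos hl]
          by_cases hk : N < k
          · rw [hN k hk, zero_mul]
          · rw [hM m (by omega), iterD_zero, smul_zero, mul_zero]
        · rw [dif_neg hl]
      simp only [hz, finsum_zero]⟩⟩

noncomputable def npow (A : PDO R d) : ℕ → PDO R d
  | 0 => 1
  | n + 1 => npow A n * A

noncomputable instance : Pow (PDO R d) ℕ := ⟨fun A n => A.npow n⟩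

/-- The monomial `r ∂^k`. -/
def mono (r : R) (k : ℤ) : PDO R d :=
  ⟨fun n => if n = k then r else 0, ⟨k, fun n hn => if_neg (by omega)⟩⟩

/-- The constant (order-zero) operator `r`. -/
def const (r : R) : PDO R d := mono r 0

/-- The operator `∂`. -/
def del : PDO R d := mono (1 : R) 1

/-- The operator `h∂`. -/
def hdel (h : Rˣ) : PDO R d := mono (h : R) 1

/-- The Lax operator `L = h²∂² + 2u`. -/
def Lop (h : Rˣ) (u : R) : PDO R d :=
  ⟨fun n => if n = 2 then (h : R) ^ 2 else if n = 0 then 2 * u else 0,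
   ⟨2, fun n hn => by
      show (if n = 2 then (h : R) ^ 2 else if n = 0 then 2 * u else 0) = 0
      rw [if_neg (by omega), if_neg (by omega)]⟩⟩

/-- The differential part `A₊`. -/
def pos (A : PDO R d) : PDO R d :=
  ⟨fun n => if 0 ≤ n then A.coeff n else 0, by
    obtain ⟨N, hN⟩ := A.bdd
    refine ⟨N, fun n hn => ?_⟩
    show (if 0 ≤ n then A.coeff n else 0) = 0
    by_cases h0 : (0 : ℤ) ≤ n
    · rw [if_pos h0]; exact hN n hn
    · rw [if_neg h0]⟩

/-- The integral part `A₋ = A − A₊`. -/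
def negp (A : PDO R d) : PDO R d :=
  ⟨fun n => if n < 0 then A.coeff n else 0, ⟨0, fun n hn => if_neg (by omega)⟩⟩

/-- The residue `Res_∂ A = a₋₁`. -/
def res (A : PDO R d) : R := A.coeff (-1)

/-- The formal adjoint, determined by `(f ∂^k)* = (−∂)^k · f`. -/
noncomputable def adj (A : PDO R d) : PDO R d :=
  ⟨fun n => ∑ᶠ k : ℤ,
      if _ : 0 ≤ k - n then
        (((-1 : ℚ) ^ k) * gbinom k (k - n).toNat) • (d^[(k - n).toNat] (A.coeff k))
      else 0, by
    obtain ⟨N, hN⟩ := A.bdd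
    refine ⟨N, fun n hn => ?_⟩
    have hz : ∀ k : ℤ, (if _ : 0 ≤ k - n then
        (((-1 : ℚ) ^ k) * gbinom k (k - n).toNat) • (d^[(k - n).toNat] (A.coeff k))
      else 0) = 0 := by
      intro k
      by_cases hl : 0 ≤ k - n
      · rw [dif_pos hl, hN k (by omega), iterD_zero, smul_zero]
      · rw [dif_neg hl]
    simp only [hz, finsum_zero]⟩

/-- The operator `P(h∂) = Σ pₙ hⁿ ∂ⁿ` associated to the symbol `P(λ) = Σ pₙ λⁿ`. -/
noncomputable def ofSymbol (h : Rˣ) (A : PDO R d) : PDO R d :=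
  ⟨fun n => A.coeff n * ((h ^ n : Rˣ) : R), by
    obtain ⟨N, hN⟩ := A.bdd
    exact ⟨N, fun n hn => by show A.coeff n * ((h ^ n : Rˣ) : R) = 0; rw [hN n hn, zero_mul]⟩⟩

/-- Apply `d^[i]` to each coefficient. -/
def mapD (i : ℕ) (A : PDO R d) : PDO R d :=
  ⟨fun n => d^[i] (A.coeff n), by
    obtain ⟨N, hN⟩ := A.bdd
    exact ⟨N, fun n hn => by show d^[i] (A.coeff n) = 0; rw [hN n hn, iterD_zero]⟩⟩

/-- The coefficientwise extension of an additive map `D : R →+ R`. -/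
def mapHom (D : R →+ R) (A : PDO R d) : PDO R d :=
  ⟨fun n => D (A.coeff n), by
    obtain ⟨N, hN⟩ := A.bdd
    exact ⟨N, fun n hn => by show D (A.coeff n) = 0; rw [hN n hn, map_zero]⟩⟩

/-- The commutator `[A, B] = AB − BA`. -/
noncomputable def comm (A B : PDO R d) : PDO R d := A * B - B * A

end PDO

/-- The Leibniz rule: `d` is a derivation. -/
def Leibniz {R : Type} [CommRing R] [Algebra ℚ R] (d : R →+ R) : Prop :=
  ∀ a b : R, d (a * b) = a * d b + b * d a

/-- `aₙ = 1/(2n+1)!!`. -/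
def kdvA (n : ℕ) : ℚ := 1 / (Nat.doubleFactorial (2 * n + 1))

/-- `bₙ = (2n−1)!!` (with `b₀ = (−1)!! = 1`). -/
def kdvB (n : ℕ) : ℚ := (Nat.doubleFactorial (2 * n - 1) : ℕ)


section Kit0

theorem gbinom_zero (k : ℤ) : gbinom k 0 = 1 := by simp [gbinom]

theorem gbinom_eq_zero {k : ℤ} {l : ℕ} (h0 : 0 ≤ k) (h : k < l) : gbinom k l = 0 := by
  rw [gbinom, Finset.prod_eq_zero (i := k.toNat) (by simp; omega), zero_div]
  have h2 : ((k.toNat : ℕ) : ℚ) = (k : ℚ) := by exact_mod_cast Int.toNat_of_nonneg h0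
  rw [h2, sub_self]

theorem gbinom_absorb (k : ℤ) (l : ℕ) :
    ((l + 1 : ℕ) : ℚ) * gbinom k (l + 1) = k * gbinom (k - 1) l := by
  rw [gbinom, gbinom, Finset.prod_range_succ', Nat.factorial_succ]
  push_cast
  have h1 : ∀ i ∈ Finset.range l, ((k : ℚ) - (↑i + 1)) = ((k : ℚ) - 1 - i) := by
    intros; ring
  rw [Finset.prod_congr rfl h1]
  have : (Nat.factorial l : ℚ) ≠ 0 := Nat.cast_ne_zero.2 (Nat.factorial_ne_zero l)
  field_simp
  ring

theorem gbinom_split (k : ℤ) (a b : ℕ) :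
    gbinom k (a + b) * ((a + b).choose a : ℚ) = gbinom k a * gbinom (k - a) b := by
  rw [gbinom, gbinom, gbinom, Finset.prod_range_add]
  have h1 : ∀ i ∈ Finset.range b, ((k:ℚ) - (↑(a + i) : ℕ)) = ((k - (a:ℤ) : ℤ) : ℚ) - i := by
    intros; push_cast; ring
  rw [Finset.prod_congr rfl h1]
  have hcn : (a+b).choose a = (a+b).factorial / (a.factorial * b.factorial) := by
    rw [Nat.choose_eq_factorial_div_factorial (Nat.le_add_right a b), Nat.add_sub_cancel_left]
  have ha : (Nat.factorial a : ℚ) ≠ 0 := Nat.cast_ne_zero.2 (Nat.factorial_ne_zero _)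
  have hb : (Nat.factorial b : ℚ) ≠ 0 := Nat.cast_ne_zero.2 (Nat.factorial_ne_zero _)
  have hab : (Nat.factorial (a+b) : ℚ) ≠ 0 := Nat.cast_ne_zero.2 (Nat.factorial_ne_zero _)
  have hc : ((a+b).choose a : ℚ) = (a+b).factorial / (a.factorial * b.factorial) := by
    rw [hcn, Nat.cast_div]
    · push_cast; ring
    · have := Nat.factorial_mul_factorial_dvd_factorial_add a b
      simpa using this
    · push_cast; exact mul_ne_zero ha hb
  rw [hc]
  field_simp


theorem gbinom_vandermonde (x y : ℤ) (b : ℕ) :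
    ∑ s ∈ Finset.range (b + 1), gbinom x s * gbinom y (b - s) = gbinom (x + y) b := by
  induction b generalizing x y with
  | zero => simp [gbinom_zero]
  | succ b ih =>
    have key : ((b+1 : ℕ) : ℚ) * (∑ s ∈ Finset.range (b + 1 + 1), gbinom x s * gbinom y (b + 1 - s))
        = ((b+1 : ℕ) : ℚ) * gbinom (x + y) (b+1) := by
      have expand : ∀ s ∈ Finset.range (b+1+1),
          ((b+1:ℕ):ℚ) * (gbinom x s * gbinom y (b+1-s))
          = ((s:ℚ) * gbinom x s) * gbinom y (b+1-s)
            + gbinom x s * (((b+1-s : ℕ) : ℚ) * gbinom y (b+1-s)) := by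
        intro s hs
        simp only [Finset.mem_range] at hs
        have : ((b+1:ℕ):ℚ) = (s:ℚ) + ((b+1-s : ℕ):ℚ) := by
          push_cast [Nat.cast_sub (by omega : s ≤ b + 1)]; ring
        rw [this]; ring
      rw [Finset.mul_sum, Finset.sum_congr rfl expand, Finset.sum_add_distrib]
      have e1 : ∑ s ∈ Finset.range (b+1+1), ((s:ℚ) * gbinom x s) * gbinom y (b+1-s)
          = x * ∑ s ∈ Finset.range (b+1), gbinom (x-1) s * gbinom y (b-s) := by
        rw [Finset.sum_range_succ' _ (b+1)]
        simp only [Nat.cast_zero, zero_mul, gbinom_zero, add_zero]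
        rw [Finset.mul_sum]
        refine Finset.sum_congr rfl fun s hs => ?_
        have habs : ((s + 1 : ℕ) : ℚ) * gbinom x (s + 1) = x * gbinom (x - 1) s :=
          gbinom_absorb x s
        have h5 : b + 1 - (s + 1) = b - s := by omega
        rw [h5]
        push_cast at habs ⊢
        rw [← mul_assoc, habs]; try ring
      have e2 : ∑ s ∈ Finset.range (b+1+1), gbinom x s * (((b+1-s : ℕ):ℚ) * gbinom y (b+1-s))
          = y * ∑ s ∈ Finset.range (b+1), gbinom x s * gbinom (y-1) (b-s) := by
        rw [Finset.sum_range_succ]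
        simp only [Nat.sub_self, Nat.cast_zero, zero_mul, mul_zero, add_zero]
        rw [Finset.mul_sum]
        refine Finset.sum_congr rfl fun s hs => ?_
        simp only [Finset.mem_range] at hs
        have h1 : b + 1 - s = (b - s) + 1 := by omega
        rw [h1]
        have habs : ((b - s + 1 : ℕ) : ℚ) * gbinom y (b - s + 1) = y * gbinom (y - 1) (b-s) :=
          gbinom_absorb y (b - s)
        push_cast at habs ⊢
        rw [habs]; ring
      rw [e1, e2, ih (x-1) y, ih x (y-1)]
      have h3 : x - 1 + y = x + y - 1 := by ring
      have h4 : x + (y - 1) = x + y - 1 := by ring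
      rw [h3, h4, ← add_mul]
      have habs : ((b + 1 : ℕ) : ℚ) * gbinom (x + y) (b + 1) = ((x + y : ℤ) : ℚ) * gbinom (x + y - 1) b :=
        gbinom_absorb (x+y) b
      push_cast at habs ⊢
      rw [habs]
    have hne : ((b+1 : ℕ) : ℚ) ≠ 0 := by positivity
    exact mul_left_cancel₀ hne key

end Kit0

section Kit

namespace PDO

set_option linter.unusedSectionVars false

variable {R : Type} [CommRing R] [Algebra ℚ R] {d : R →+ R}

theorem iterD_add (d : R →+ R) (j : ℕ) (a b : R) : d^[j] (a + b) = d^[j] a + d^[j] b := by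
  induction j generalizing a b with
  | zero => rfl
  | succ j ih => rw [Function.iterate_succ_apply, map_add, ih, ← Function.iterate_succ_apply, ← Function.iterate_succ_apply]

theorem iterD_smul (d : R →+ R) (j : ℕ) (q : ℚ) (a : R) : d^[j] (q • a) = q • d^[j] a := by
  induction j generalizing a with
  | zero => rfl
  | succ j ih => rw [Function.iterate_succ_apply, map_rat_smul, ih, ← Function.iterate_succ_apply]

theorem iterD_sum (d : R →+ R) (j : ℕ) {ι : Type*} (s : Finset ι) (f : ι → R) :
    d^[j] (∑ i ∈ s, f i) = ∑ i ∈ s, d^[j] (f i) := by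
  classical
  induction s using Finset.induction with
  | empty => simp [iterD_zero]
  | insert _ _ hx ih => rw [Finset.sum_insert hx, Finset.sum_insert hx, iterD_add, ih]

theorem d_one (hd : Leibniz d) : d (1 : R) = 0 := by
  have h1 := hd 1 1
  rw [mul_one, one_mul] at h1
  have h2 : d 1 + d 1 = d 1 + 0 := by rw [add_zero, ← h1]
  exact add_left_cancel h2

theorem iterD_one (hd : Leibniz d) (j : ℕ) (hj : 0 < j) : d^[j] (1 : R) = 0 := by
  obtain ⟨j, rfl⟩ : ∃ i, j = i + 1 := ⟨j - 1, by omega⟩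
  rw [Function.iterate_succ_apply, d_one hd]
  exact iterD_zero d j

theorem iterD_of_d_eq_zero {r : R} (hr : d r = 0) (j : ℕ) (hj : 0 < j) : d^[j] r = 0 := by
  obtain ⟨j, rfl⟩ : ∃ i, j = i + 1 := ⟨j - 1, by omega⟩
  rw [Function.iterate_succ_apply, hr]
  exact iterD_zero d j

theorem d_pow_eq_zero (hd : Leibniz d) {r : R} (hr : d r = 0) (m : ℕ) : d (r ^ m) = 0 := by
  induction m with
  | zero => simpa using d_one hd
  | succ m ih => rw [pow_succ, hd, ih, hr, mul_zero, mul_zero, add_zero]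

theorem iterD_mul (hd : Leibniz d) (j : ℕ) (a b : R) :
    d^[j] (a * b) = ∑ i ∈ Finset.range (j+1),
      ((j.choose i : ℚ)) • (d^[i] a * d^[j - i] b) := by
  induction j with
  | zero => simp
  | succ j ih =>
    rw [Function.iterate_succ_apply', ih, map_sum]
    have step : ∀ i ∈ Finset.range (j+1),
        d (((j.choose i : ℚ)) • (d^[i] a * d^[j-i] b))
        = ((j.choose i : ℚ)) • (d^[i] a * d^[j-i+1] b)
          + ((j.choose i : ℚ)) • (d^[i+1] a * d^[j-i] b) := by
      intro i hi
      rw [map_rat_smul, hd, smul_add]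
      rw [Function.iterate_succ_apply', Function.iterate_succ_apply']
      ring_nf
    rw [Finset.sum_congr rfl step, Finset.sum_add_distrib]
    -- S1: ∑_{i≤j} c_i • (d^i a * d^{j+1-i} b), with j-i+1 = j+1-i for i ≤ j
    have hS1 : ∑ i ∈ Finset.range (j+1), ((j.choose i : ℚ)) • (d^[i] a * d^[j-i+1] b)
        = ∑ i ∈ Finset.range (j+1), ((j.choose i : ℚ)) • (d^[i] a * d^[j+1-i] b) := by
      refine Finset.sum_congr rfl fun i hi => ?_
      simp only [Finset.mem_range] at hi
      have : j - i + 1 = j + 1 - i := by omega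
      rw [this]
    rw [hS1]
    -- target: ∑_{i ∈ range (j+2)} ((j+1).choose i) • (d^i a * d^{j+1-i} b)
    rw [Finset.sum_range_succ' _ (j+1)]
    simp only [Nat.choose_zero_right, Nat.cast_one, one_smul, Function.iterate_zero_apply,
      Nat.sub_zero]
    -- RHS now: ∑_{i ∈ range (j+1)} ((j+1).choose (i+1)) • (d^{i+1} a * d^{j+1-(i+1)} b) + a * d^{j+1} b
    have hxp : ∀ i ∈ Finset.range (j+1),
        (((j+1).choose (i+1) : ℚ)) • (d^[i+1] a * d^[j+1-(i+1)] b)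
        = ((j.choose (i+1) : ℚ)) • (d^[i+1] a * d^[j-i] b)
          + ((j.choose i : ℚ)) • (d^[i+1] a * d^[j-i] b) := by
      intro i hi
      have h1 : (j+1).choose (i+1) = j.choose i + j.choose (i+1) := Nat.choose_succ_succ j i
      have h2 : j + 1 - (i + 1) = j - i := by omega
      rw [h1, h2, ← add_smul]
      push_cast
      ring_nf
    rw [Finset.sum_congr rfl hxp, Finset.sum_add_distrib]
    -- now match pieces
    have hS1' : ∑ i ∈ Finset.range (j+1), ((j.choose i : ℚ)) • (d^[i] a * d^[j+1-i] b)
        = a * d^[j+1] b + ∑ i ∈ Finset.range j, ((j.choose (i+1) : ℚ)) • (d^[i+1] a * d^[j-i] b) := by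
      rw [Finset.sum_range_succ' _ j]
      simp only [Nat.choose_zero_right, Nat.cast_one, one_smul, Function.iterate_zero_apply,
        Nat.sub_zero]
      rw [add_comm]
      refine congrArg₂ _ rfl (Finset.sum_congr rfl fun i hi => ?_)
      simp only [Finset.mem_range] at hi
      have : j + 1 - (i + 1) = j - i := by omega
      rw [this]
    have hS2' : ∑ i ∈ Finset.range (j+1), ((j.choose (i+1) : ℚ)) • (d^[i+1] a * d^[j-i] b)
        = ∑ i ∈ Finset.range j, ((j.choose (i+1) : ℚ)) • (d^[i+1] a * d^[j-i] b) := by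
      rw [Finset.sum_range_succ, Nat.choose_succ_self]
      simp
    rw [hS1', hS2']
    abel

end PDO

end Kit

section Kit2

namespace PDO

set_option linter.unusedSectionVars false

variable {R : Type} [CommRing R] [Algebra ℚ R] {d : R →+ R}

/-- Canonical term in the product expansion. -/
noncomputable def G (A B : PDO R d) (n k : ℤ) (l : ℕ) : R :=
  A.coeff k * (gbinom k l • d^[l] (B.coeff (n - k + l)))

theorem G_zero_of_A {A B : PDO R d} {n k : ℤ} {l : ℕ} (h : A.coeff k = 0) : G A B n k l = 0 := by
  rw [G, h, zero_mul]

theorem G_zero_of_B {A B : PDO R d} {n k : ℤ} {l : ℕ} (h : B.coeff (n - k + l) = 0) :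
    G A B n k l = 0 := by
  rw [G, h, iterD_zero, smul_zero, mul_zero]

theorem coeff_mul (A B : PDO R d) (n : ℤ) (NB : ℤ)
    (hB : ∀ m, NB < m → B.coeff m = 0)
    (s : Finset ℤ) (hs : ∀ k ∉ s, A.coeff k = 0 ∨ k < n - NB)
    (L : ℕ) (hL : ∀ k ∈ s, NB + k - n < (L : ℤ)) :
    (A * B).coeff n = ∑ k ∈ s, ∑ l ∈ Finset.range L, G A B n k l := by
  have hterm : (A * B).coeff n = ∑ᶠ (k : ℤ), ∑ᶠ (m : ℤ),
      (if _ : 0 ≤ k + m - n then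
        A.coeff k * (gbinom k (k + m - n).toNat • (d^[(k + m - n).toNat] (B.coeff m)))
      else 0) := rfl
  rw [hterm]
  have step1 : ∀ k : ℤ, (∑ᶠ (m : ℤ),
      (if _ : 0 ≤ k + m - n then
        A.coeff k * (gbinom k (k + m - n).toNat • (d^[(k + m - n).toNat] (B.coeff m)))
      else 0)) = ∑ m ∈ Finset.Icc (n - k) NB,
      (if _ : 0 ≤ k + m - n then
        A.coeff k * (gbinom k (k + m - n).toNat • (d^[(k + m - n).toNat] (B.coeff m)))
      else 0) := by
    intro k
    refine finsum_eq_sum_of_support_subset _ ?_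
    intro m hm
    simp only [Function.mem_support] at hm
    simp only [Finset.coe_Icc, Set.mem_Icc]
    by_contra hc
    push_neg at hc
    apply hm
    by_cases h0 : 0 ≤ k + m - n
    · rw [dif_pos h0]
      have hmNB : NB < m := by
        rcases lt_or_ge m (n - k) with h | h
        · omega
        · exact hc h
      rw [hB m hmNB, iterD_zero, smul_zero, mul_zero]
    · rw [dif_neg h0]
  rw [finsum_congr step1]
  have step2 : (∑ᶠ (k : ℤ), ∑ m ∈ Finset.Icc (n - k) NB,
      (if _ : 0 ≤ k + m - n then
        A.coeff k * (gbinom k (k + m - n).toNat • (d^[(k + m - n).toNat] (B.coeff m)))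
      else 0)) = ∑ k ∈ s, ∑ m ∈ Finset.Icc (n - k) NB,
      (if _ : 0 ≤ k + m - n then
        A.coeff k * (gbinom k (k + m - n).toNat • (d^[(k + m - n).toNat] (B.coeff m)))
      else 0) := by
    refine finsum_eq_sum_of_support_subset _ ?_
    intro k hk
    simp only [Function.mem_support] at hk
    simp only [Finset.mem_coe]
    by_contra hc
    apply hk
    rcases hs k hc with h | h
    · refine Finset.sum_eq_zero fun m _ => ?_
      by_cases h0 : 0 ≤ k + m - n
      · rw [dif_pos h0, h, zero_mul]
      · rw [dif_neg h0]
    · rw [Finset.Icc_eq_empty (by omega), Finset.sum_empty]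
  rw [step2]
  refine Finset.sum_congr rfl fun k hk => ?_
  -- inner sum
  have hRHS : ∑ l ∈ Finset.range L, G A B n k l
      = ∑ l ∈ (Finset.range L).filter (fun l : ℕ => n - k + (l : ℤ) ≤ NB), G A B n k l := by
    refine (Finset.sum_filter_of_ne fun l hl hne => ?_).symm
    by_contra hc
    push_neg at hc
    exact hne (G_zero_of_B (hB _ hc))
  rw [hRHS]
  refine Finset.sum_nbij' (fun m => (k + m - n).toNat) (fun l => n - k + (l : ℤ)) ?_ ?_ ?_ ?_ ?_
  · intro m hm
    simp only [Finset.mem_Icc] at hm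
    simp only [Finset.mem_filter, Finset.mem_range]
    have h1 : ((k + m - n).toNat : ℤ) = k + m - n := Int.toNat_of_nonneg (by omega)
    constructor
    · have := hL k hk; omega
    · omega
  · intro l hl
    simp only [Finset.mem_filter, Finset.mem_range] at hl
    simp only [Finset.mem_Icc]
    omega
  · intro m hm
    simp only [Finset.mem_Icc] at hm
    show n - k + (((k + m - n).toNat : ℕ) : ℤ) = m
    omega
  · intro l hl
    show (k + (n - k + (l:ℤ)) - n).toNat = l
    omega
  · intro m hm
    simp only [Finset.mem_Icc] at hm
    rw [dif_pos (by omega : 0 ≤ k + m - n), G]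
    have h1 : n - k + ((k + m - n).toNat : ℤ) = m := by
      have := Int.toNat_of_nonneg (by omega : 0 ≤ k + m - n); omega
    rw [h1]

theorem coeff_mul_bound {A B : PDO R d} {NA NB : ℤ}
    (hA : ∀ k, NA < k → A.coeff k = 0) (hB : ∀ m, NB < m → B.coeff m = 0) :
    ∀ j, NA + NB < j → (A * B).coeff j = 0 := by
  intro j hj
  rw [coeff_mul A B j NB hB ∅ (fun k _ => by
      rcases lt_or_ge NA k with h | h
      · exact Or.inl (hA k h)
      · exact Or.inr (by omega)) 0 (by simp)]
  simp

end PDO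

end Kit2

section Kit3

namespace PDO

set_option linter.unusedSectionVars false

variable {R : Type} [CommRing R] [Algebra ℚ R] {d : R →+ R}

theorem coeff_add (A B : PDO R d) (n : ℤ) : (A + B).coeff n = A.coeff n + B.coeff n := rfl
theorem coeff_neg (A : PDO R d) (n : ℤ) : (-A).coeff n = -A.coeff n := rfl
theorem coeff_smul (q : ℚ) (A : PDO R d) (n : ℤ) : (q • A).coeff n = q • A.coeff n := rfl
theorem coeff_zero' (n : ℤ) : (0 : PDO R d).coeff n = 0 := rfl
theorem coeff_sub (A B : PDO R d) (n : ℤ) : (A - B).coeff n = A.coeff n - B.coeff n := by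
  rw [sub_eq_add_neg, coeff_add, coeff_neg, sub_eq_add_neg]

theorem mul_add' (A B C : PDO R d) : A * (B + C) = A * B + A * C := by
  refine ext' (funext fun n => ?_)
  obtain ⟨NA, hNA⟩ := A.bdd
  obtain ⟨NB, hNB⟩ := B.bdd
  obtain ⟨NC, hNC⟩ := C.bdd
  set N := max NB NC with hN
  have hB : ∀ m, N < m → B.coeff m = 0 := fun m hm => hNB m (by omega)
  have hC : ∀ m, N < m → C.coeff m = 0 := fun m hm => hNC m (by omega)
  have hBC : ∀ m, N < m → (B + C).coeff m = 0 := fun m hm => by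
    rw [coeff_add, hB m hm, hC m hm, add_zero]
  set s : Finset ℤ := Finset.Icc (n - N) NA with hs
  have hsc : ∀ k ∉ s, A.coeff k = 0 ∨ k < n - N := by
    intro k hk
    simp only [hs, Finset.mem_Icc, not_and, not_le] at hk
    rcases le_or_gt (n - N) k with h | h
    · exact Or.inl (hNA k (hk h))
    · exact Or.inr h
  set L : ℕ := (NA + N - n).toNat + 1 with hLdef
  have hL : ∀ k ∈ s, N + k - n < (L : ℤ) := by
    intro k hk
    simp only [hs, Finset.mem_Icc] at hk
    simp only [hLdef]
    push_cast
    omega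
  rw [coeff_add, coeff_mul A (B + C) n N hBC s hsc L hL, coeff_mul A B n N hB s hsc L hL,
    coeff_mul A C n N hC s hsc L hL, ← Finset.sum_add_distrib]
  refine Finset.sum_congr rfl fun k _ => ?_
  rw [← Finset.sum_add_distrib]
  refine Finset.sum_congr rfl fun l _ => ?_
  rw [G, G, G, coeff_add, iterD_add, smul_add, mul_add]

theorem add_mul' (A B C : PDO R d) : (A + B) * C = A * C + B * C := by
  refine ext' (funext fun n => ?_)
  obtain ⟨NA, hNA⟩ := A.bdd
  obtain ⟨NB, hNB⟩ := B.bdd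
  obtain ⟨NC, hNC⟩ := C.bdd
  have hC : ∀ m, NC < m → C.coeff m = 0 := hNC
  set N := max NA NB with hN
  set s : Finset ℤ := Finset.Icc (n - NC) N with hs
  have hsc1 : ∀ k ∉ s, (A + B).coeff k = 0 ∨ k < n - NC := by
    intro k hk
    simp only [hs, Finset.mem_Icc, not_and, not_le] at hk
    rcases le_or_gt (n - NC) k with h | h
    · exact Or.inl (by rw [coeff_add, hNA k (by have := hk h; omega),
        hNB k (by have := hk h; omega), add_zero])
    · exact Or.inr h
  have hsc2 : ∀ k ∉ s, A.coeff k = 0 ∨ k < n - NC := by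
    intro k hk
    simp only [hs, Finset.mem_Icc, not_and, not_le] at hk
    rcases le_or_gt (n - NC) k with h | h
    · exact Or.inl (hNA k (by have := hk h; omega))
    · exact Or.inr h
  have hsc3 : ∀ k ∉ s, B.coeff k = 0 ∨ k < n - NC := by
    intro k hk
    simp only [hs, Finset.mem_Icc, not_and, not_le] at hk
    rcases le_or_gt (n - NC) k with h | h
    · exact Or.inl (hNB k (by have := hk h; omega))
    · exact Or.inr h
  set L : ℕ := (N + NC - n).toNat + 1 with hLdef
  have hL : ∀ k ∈ s, NC + k - n < (L : ℤ) := by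
    intro k hk
    simp only [hs, Finset.mem_Icc] at hk
    simp only [hLdef]
    push_cast
    omega
  rw [coeff_add, coeff_mul (A + B) C n NC hC s hsc1 L hL, coeff_mul A C n NC hC s hsc2 L hL,
    coeff_mul B C n NC hC s hsc3 L hL, ← Finset.sum_add_distrib]
  refine Finset.sum_congr rfl fun k _ => ?_
  rw [← Finset.sum_add_distrib]
  refine Finset.sum_congr rfl fun l _ => ?_
  rw [G, G, G, coeff_add, add_mul]

theorem smul_mul' (q : ℚ) (A B : PDO R d) : (q • A) * B = q • (A * B) := by
  refine ext' (funext fun n => ?_)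
  obtain ⟨NA, hNA⟩ := A.bdd
  obtain ⟨NB, hNB⟩ := B.bdd
  set s : Finset ℤ := Finset.Icc (n - NB) NA with hs
  have hsc1 : ∀ k ∉ s, (q • A).coeff k = 0 ∨ k < n - NB := by
    intro k hk
    simp only [hs, Finset.mem_Icc, not_and, not_le] at hk
    rcases le_or_gt (n - NB) k with h | h
    · exact Or.inl (by rw [coeff_smul, hNA k (hk h), smul_zero])
    · exact Or.inr h
  have hsc2 : ∀ k ∉ s, A.coeff k = 0 ∨ k < n - NB := by
    intro k hk
    simp only [hs, Finset.mem_Icc, not_and, not_le] at hk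
    rcases le_or_gt (n - NB) k with h | h
    · exact Or.inl (hNA k (hk h))
    · exact Or.inr h
  set L : ℕ := (NA + NB - n).toNat + 1 with hLdef
  have hL : ∀ k ∈ s, NB + k - n < (L : ℤ) := by
    intro k hk
    simp only [hs, Finset.mem_Icc] at hk
    simp only [hLdef]
    push_cast
    omega
  rw [coeff_smul, coeff_mul (q • A) B n NB hNB s hsc1 L hL, coeff_mul A B n NB hNB s hsc2 L hL,
    Finset.smul_sum]
  refine Finset.sum_congr rfl fun k _ => ?_
  rw [Finset.smul_sum]
  refine Finset.sum_congr rfl fun l _ => ?_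
  rw [G, G, coeff_smul, smul_mul_assoc]

theorem mul_smul' (q : ℚ) (A B : PDO R d) : A * (q • B) = q • (A * B) := by
  refine ext' (funext fun n => ?_)
  obtain ⟨NA, hNA⟩ := A.bdd
  obtain ⟨NB, hNB⟩ := B.bdd
  have hB2 : ∀ m, NB < m → (q • B).coeff m = 0 := fun m hm => by
    rw [coeff_smul, hNB m hm, smul_zero]
  set s : Finset ℤ := Finset.Icc (n - NB) NA with hs
  have hsc : ∀ k ∉ s, A.coeff k = 0 ∨ k < n - NB := by
    intro k hk
    simp only [hs, Finset.mem_Icc, not_and, not_le] at hk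
    rcases le_or_gt (n - NB) k with h | h
    · exact Or.inl (hNA k (hk h))
    · exact Or.inr h
  set L : ℕ := (NA + NB - n).toNat + 1 with hLdef
  have hL : ∀ k ∈ s, NB + k - n < (L : ℤ) := by
    intro k hk
    simp only [hs, Finset.mem_Icc] at hk
    simp only [hLdef]
    push_cast
    omega
  rw [coeff_smul, coeff_mul A (q • B) n NB hB2 s hsc L hL, coeff_mul A B n NB hNB s hsc L hL,
    Finset.smul_sum]
  refine Finset.sum_congr rfl fun k _ => ?_
  rw [Finset.smul_sum]
  refine Finset.sum_congr rfl fun l _ => ?_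
  rw [G, G, coeff_smul, iterD_smul, smul_comm (gbinom k l) q, mul_smul_comm]

theorem zero_mul' (A : PDO R d) : (0 : PDO R d) * A = 0 := by
  refine ext' (funext fun n => ?_)
  obtain ⟨NA, hNA⟩ := A.bdd
  rw [coeff_mul 0 A n NA hNA ∅ (fun k _ => Or.inl rfl) 0 (by simp), Finset.sum_empty]
  rfl

theorem mul_zero' (A : PDO R d) : A * (0 : PDO R d) = 0 := by
  refine ext' (funext fun n => ?_)
  obtain ⟨NA, hNA⟩ := A.bdd
  have h0 : ∀ m : ℤ, (0:ℤ) < m → (0 : PDO R d).coeff m = 0 := fun _ _ => rfl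
  set s : Finset ℤ := Finset.Icc n NA with hs
  have hsc : ∀ k ∉ s, A.coeff k = 0 ∨ k < n - 0 := by
    intro k hk
    simp only [hs, Finset.mem_Icc, not_and, not_le] at hk
    rcases le_or_gt n k with h | h
    · exact Or.inl (hNA k (hk h))
    · exact Or.inr (by omega)
  set L : ℕ := (NA - n).toNat + 1 with hLdef
  have hL : ∀ k ∈ s, 0 + k - n < (L : ℤ) := by
    intro k hk
    simp only [hs, Finset.mem_Icc] at hk
    simp only [hLdef]
    push_cast
    omega
  rw [coeff_mul A 0 n 0 h0 s hsc L hL]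
  rw [show (0 : PDO R d).coeff n = 0 from rfl]
  refine Finset.sum_eq_zero fun k _ => Finset.sum_eq_zero fun l _ => G_zero_of_B rfl

theorem neg_mul' (A B : PDO R d) : (-A) * B = -(A * B) := by
  have h : (-A) * B + A * B = 0 := by
    rw [← add_mul', neg_add_cancel, zero_mul']
  exact eq_neg_of_add_eq_zero_left h

theorem mul_neg' (A B : PDO R d) : A * (-B) = -(A * B) := by
  have h : A * (-B) + A * B = 0 := by
    rw [← mul_add', neg_add_cancel, mul_zero']
  exact eq_neg_of_add_eq_zero_left h

theorem sub_mul' (A B C : PDO R d) : (A - B) * C = A * C - B * C := by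
  rw [sub_eq_add_neg, add_mul', neg_mul', ← sub_eq_add_neg]

theorem mul_sub' (A B C : PDO R d) : A * (B - C) = A * B - A * C := by
  rw [sub_eq_add_neg, mul_add', mul_neg', ← sub_eq_add_neg]

theorem coeff_one (n : ℤ) : (1 : PDO R d).coeff n = if n = 0 then 1 else 0 := rfl

theorem one_eq_const : (1 : PDO R d) = const 1 := rfl

theorem coeff_const (r : R) (n : ℤ) : (const r : PDO R d).coeff n = if n = 0 then r else 0 := rfl

theorem const_mul_coeff (r : R) (A : PDO R d) (n : ℤ) :
    ((const r : PDO R d) * A).coeff n = r * A.coeff n := by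
  obtain ⟨NA, hNA⟩ := A.bdd
  set N := max NA n with hNdef
  have hA : ∀ m, N < m → A.coeff m = 0 := fun m hm => hNA m (by omega)
  have hsc : ∀ k ∉ ({0} : Finset ℤ), (const r : PDO R d).coeff k = 0 ∨ k < n - N := by
    intro k hk
    simp only [Finset.mem_singleton] at hk
    exact Or.inl (by rw [coeff_const, if_neg hk])
  set L : ℕ := (N - n).toNat + 1 with hLdef
  have hL : ∀ k ∈ ({0} : Finset ℤ), N + k - n < (L : ℤ) := by
    intro k hk
    simp only [Finset.mem_singleton] at hk
    subst hk
    simp only [hLdef]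
    push_cast
    omega
  rw [coeff_mul (const r) A n N hA {0} hsc L hL, Finset.sum_singleton]
  rw [Finset.sum_eq_single 0]
  · rw [G, coeff_const, if_pos rfl, gbinom_zero, one_smul, Function.iterate_zero_apply]
    norm_num
  · intro l _ hl
    rw [G, gbinom_eq_zero le_rfl (by exact_mod_cast Nat.pos_of_ne_zero hl), zero_smul, mul_zero]
  · intro habs
    exact absurd (Finset.mem_range.2 (by omega)) habs

theorem mul_const_coeff {r : R} (hr : d r = 0) (A : PDO R d) (n : ℤ) :
    (A * (const r : PDO R d)).coeff n = A.coeff n * r := by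
  obtain ⟨NA, hNA⟩ := A.bdd
  have h0 : ∀ m : ℤ, (0:ℤ) < m → (const r : PDO R d).coeff m = 0 := fun m hm => by
    rw [coeff_const, if_neg (by omega)]
  set N := max NA n with hNdef
  set s : Finset ℤ := Finset.Icc n N with hs
  have hsc : ∀ k ∉ s, A.coeff k = 0 ∨ k < n - 0 := by
    intro k hk
    simp only [hs, Finset.mem_Icc, not_and, not_le] at hk
    rcases le_or_gt n k with h | h
    · exact Or.inl (hNA k (by have := hk h; omega))
    · exact Or.inr (by omega)
  set L : ℕ := (N - n).toNat + 1 with hLdef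
  have hL : ∀ k ∈ s, 0 + k - n < (L : ℤ) := by
    intro k hk
    simp only [hs, Finset.mem_Icc] at hk
    simp only [hLdef]
    push_cast
    omega
  rw [coeff_mul A (const r) n 0 h0 s hsc L hL]
  rw [Finset.sum_eq_single n]
  · rw [Finset.sum_eq_single 0]
    · rw [G, coeff_const]
      rw [show n - n + ((0:ℕ):ℤ) = 0 by omega, if_pos rfl, gbinom_zero, one_smul,
        Function.iterate_zero_apply]
    · intro l _ hl
      refine G_zero_of_B ?_
      rw [coeff_const, if_neg (by omega)]
    · intro habs
      exact absurd (Finset.mem_range.2 (by omega)) habs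
  · intro k _ hk
    refine Finset.sum_eq_zero fun l _ => ?_
    by_cases hcase : n - k + (l : ℤ) = 0
    · -- k = n + l, l ≥ 1 since k ≠ n; d^[l] r = 0
      rw [G, coeff_const, if_pos hcase]
      have hl1 : 0 < l := by
        rcases Nat.eq_zero_or_pos l with h | h
        · exfalso; apply hk; omega
        · exact h
      rw [iterD_of_d_eq_zero hr l hl1, smul_zero, mul_zero]
    · exact G_zero_of_B (by rw [coeff_const, if_neg hcase])
  · intro habs
    exfalso
    apply habs
    simp only [hs, Finset.mem_Icc]
    omega

theorem mul_one' (hd : Leibniz d) (A : PDO R d) : A * 1 = A := by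
  refine ext' (funext fun n => ?_)
  rw [one_eq_const, mul_const_coeff (d_one hd), mul_one]

theorem one_mul' (A : PDO R d) : (1 : PDO R d) * A = A := by
  refine ext' (funext fun n => ?_)
  rw [one_eq_const, const_mul_coeff, one_mul]

theorem mul_const_comm {r : R} (hr : d r = 0) (A : PDO R d) :
    A * (const r : PDO R d) = const r * A := by
  refine ext' (funext fun n => ?_)
  rw [mul_const_coeff hr, const_mul_coeff, mul_comm]

theorem coeff_mono (r : R) (k n : ℤ) : (mono r k : PDO R d).coeff n = if n = k then r else 0 := rfl

theorem mono_mul_mono {b : R} (hb : d b = 0) (a : R) (k j : ℤ) :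
    (mono a k : PDO R d) * mono b j = mono (a * b) (k + j) := by
  refine ext' (funext fun n => ?_)
  have hB : ∀ m, j < m → (mono b j : PDO R d).coeff m = 0 := fun m hm => by
    rw [coeff_mono, if_neg (by omega)]
  have hsc : ∀ k' ∉ ({k} : Finset ℤ), (mono a k : PDO R d).coeff k' = 0 ∨ k' < n - j := by
    intro k' hk'
    simp only [Finset.mem_singleton] at hk'
    exact Or.inl (by rw [coeff_mono, if_neg hk'])
  set L : ℕ := (k + j - n).toNat + 1 with hLdef
  have hL : ∀ k' ∈ ({k} : Finset ℤ), j + k' - n < (L : ℤ) := by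
    intro k' hk'
    simp only [Finset.mem_singleton] at hk'
    subst hk'
    simp only [hLdef]
    push_cast
    omega
  rw [coeff_mul (mono a k) (mono b j) n j hB {k} hsc L hL, Finset.sum_singleton]
  by_cases hn : n = k + j
  · rw [Finset.sum_eq_single 0]
    · have e1 : n - k + ((0:ℕ):ℤ) = j := by omega
      rw [G, coeff_mono, coeff_mono, coeff_mono, e1, if_pos rfl, if_pos rfl, if_pos hn,
        gbinom_zero, one_smul, Function.iterate_zero_apply]
    · intro l _ hl
      exact G_zero_of_B (by rw [coeff_mono, if_neg (by omega)])
    · intro habs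
      exact absurd (Finset.mem_range.2 (by omega)) habs
  · rw [coeff_mono, if_neg hn]
    refine Finset.sum_eq_zero fun l _ => ?_
    by_cases hcase : n - k + (l : ℤ) = j
    · rw [G, coeff_mono, coeff_mono, if_pos hcase, if_pos rfl]
      have hl1 : 0 < l := by
        rcases Nat.eq_zero_or_pos l with h | h
        · exfalso; apply hn; omega
        · exact h
      rw [iterD_of_d_eq_zero hb l hl1, smul_zero, mul_zero]
    · exact G_zero_of_B (by rw [coeff_mono, if_neg hcase])

end PDO

end Kit3



section Tools
variable {M : Type*} [AddCommGroup M]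

theorem sum_triangle (N : ℕ) (g : ℕ → ℕ → M) :
    ∑ t ∈ Finset.range N, ∑ i ∈ Finset.range (t+1), g i (t - i)
      = ∑ x ∈ (Finset.range N ×ˢ Finset.range N).filter (fun x => x.1 + x.2 < N),
          g x.1 x.2 := by
  rw [Finset.sum_sigma']
  refine Finset.sum_nbij' (fun x => (x.2, x.1 - x.2)) (fun y => ⟨y.1 + y.2, y.1⟩) ?_ ?_ ?_ ?_ ?_
  · rintro ⟨t, i⟩ hx
    simp only [Finset.mem_sigma, Finset.mem_range] at hx
    simp only [Finset.mem_filter, Finset.mem_product, Finset.mem_range]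
    omega
  · rintro ⟨a, b⟩ hy
    simp only [Finset.mem_filter, Finset.mem_product, Finset.mem_range] at hy
    simp only [Finset.mem_sigma, Finset.mem_range]
    omega
  · rintro ⟨t, i⟩ hx
    simp only [Finset.mem_sigma, Finset.mem_range] at hx
    simp only
    have h : i + (t - i) = t := by omega
    rw [h]
  · rintro ⟨a, b⟩ hy
    simp only
    have h : a + b - a = b := by omega
    rw [h]
  · rintro ⟨t, i⟩ hx; rfl

theorem sumTranslate (s t : Finset ℤ) (c : ℤ) (f : ℤ → M)
    (h1 : ∀ w ∈ t, w - c ∉ s → f w = 0)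
    (h2 : ∀ m ∈ s, m + c ∉ t → f (m + c) = 0) :
    ∑ m ∈ s, f (m + c) = ∑ w ∈ t, f w := by
  have e1 : ∑ m ∈ s, f (m + c) = ∑ m ∈ s.filter (fun m => m + c ∈ t), f (m + c) :=
    (Finset.sum_filter_of_ne (fun m hm hne => by
        by_contra hmem; exact hne (h2 m hm hmem))).symm
  have e2 : ∑ w ∈ t, f w = ∑ w ∈ t.filter (fun w => w - c ∈ s), f w :=
    (Finset.sum_filter_of_ne (fun w hw hne => by
        by_contra hmem; exact hne (h1 w hw hmem))).symm
  rw [e1, e2]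
  refine Finset.sum_nbij' (fun m => m + c) (fun w => w - c) ?_ ?_ ?_ ?_ ?_
  · intro a ha
    rw [Finset.mem_filter] at ha ⊢
    refine ⟨ha.2, ?_⟩
    have : a + c - c = a := by omega
    rw [this]; exact ha.1
  · intro a ha
    rw [Finset.mem_filter] at ha ⊢
    refine ⟨ha.2, ?_⟩
    have : a - c + c = a := by omega
    rw [this]; exact ha.1
  · intro a _
    show a + c - c = a
    omega
  · intro a _
    show a - c + c = a
    omega
  · intro a _; rfl

end Tools

section Kit4

namespace PDO

set_option linter.unusedSectionVars false
set_option maxHeartbeats 1600000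

variable {R : Type} [CommRing R] [Algebra ℚ R] {d : R →+ R}

theorem sum_perm4 {M : Type*} [AddCommMonoid M] {ι1 ι2 ι3 ι4 : Type*}
    (s1 : Finset ι1) (s2 : Finset ι2) (s3 : Finset ι3) (s4 : Finset ι4)
    (f : ι1 → ι2 → ι3 → ι4 → M) :
    ∑ a ∈ s1, ∑ b ∈ s2, ∑ c ∈ s3, ∑ e ∈ s4, f a b c e
      = ∑ c ∈ s3, ∑ e ∈ s4, ∑ b ∈ s2, ∑ a ∈ s1, f a b c e :=
  calc ∑ a ∈ s1, ∑ b ∈ s2, ∑ c ∈ s3, ∑ e ∈ s4, f a b c e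
      = ∑ a ∈ s1, ∑ c ∈ s3, ∑ b ∈ s2, ∑ e ∈ s4, f a b c e :=
        Finset.sum_congr rfl fun a _ => Finset.sum_comm
    _ = ∑ c ∈ s3, ∑ a ∈ s1, ∑ b ∈ s2, ∑ e ∈ s4, f a b c e := Finset.sum_comm
    _ = ∑ c ∈ s3, ∑ a ∈ s1, ∑ e ∈ s4, ∑ b ∈ s2, f a b c e :=
        Finset.sum_congr rfl fun c _ => Finset.sum_congr rfl fun a _ => Finset.sum_comm
    _ = ∑ c ∈ s3, ∑ e ∈ s4, ∑ a ∈ s1, ∑ b ∈ s2, f a b c e :=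
        Finset.sum_congr rfl fun c _ => Finset.sum_comm
    _ = ∑ c ∈ s3, ∑ e ∈ s4, ∑ b ∈ s2, ∑ a ∈ s1, f a b c e :=
        Finset.sum_congr rfl fun c _ => Finset.sum_congr rfl fun e _ => Finset.sum_comm

/-- canonical triple-product term -/
noncomputable def Vterm (A B C : PDO R d) (n k w : ℤ) (α β : ℕ) : R :=
  A.coeff k * (d^[α] (B.coeff w) * d^[β] (C.coeff (n - k - w + α + β)))

theorem Vterm_zero_A {A B C : PDO R d} {n k w : ℤ} {α β : ℕ} (h : A.coeff k = 0) :
    Vterm A B C n k w α β = 0 := by rw [Vterm, h, zero_mul]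

theorem Vterm_zero_B {A B C : PDO R d} {n k w : ℤ} {α β : ℕ} (h : B.coeff w = 0) :
    Vterm A B C n k w α β = 0 := by rw [Vterm, h, iterD_zero, zero_mul, mul_zero]

theorem Vterm_zero_C {A B C : PDO R d} {n k w : ℤ} {α β : ℕ}
    (h : C.coeff (n - k - w + α + β) = 0) :
    Vterm A B C n k w α β = 0 := by rw [Vterm, h, iterD_zero, mul_zero, mul_zero]

theorem rearr (a x y : R) (p q : ℚ) : (a * (p • x)) * (q • y) = (p * q) • (a * (x * y)) := by
  rw [mul_smul_comm p a x, smul_mul_assoc p (a * x) (q • y), mul_smul_comm q (a * x) y,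
    smul_smul, mul_assoc]

theorem rearr2 (a x : R) (p q r : ℚ) : a * (p • (q • (r • x))) = (p * (q * r)) • (a * x) := by
  rw [smul_smul, smul_smul, mul_smul_comm, mul_assoc]

theorem coeff_assoc_left (A B C : PDO R d) (n NA NB NC : ℤ)
    (hNA : ∀ m, NA < m → A.coeff m = 0)
    (hNB : ∀ m, NB < m → B.coeff m = 0)
    (hNC : ∀ m, NC < m → C.coeff m = 0) :
    ((A * B) * C).coeff n
      = ∑ k ∈ Finset.Icc (n - NB - NC) NA, ∑ α ∈ Finset.range ((NA+NB+NC-n).toNat + 1),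
        ∑ β ∈ Finset.range (2*((NA+NB+NC-n).toNat + 1)), ∑ w ∈ Finset.Icc (n - NA - NC) NB,
          (gbinom k α * gbinom (k + w - α) β) • Vterm A B C n k w α β := by
  set L : ℕ := (NA+NB+NC-n).toNat + 1 with hLdef
  set SK : Finset ℤ := Finset.Icc (n - NB - NC) NA with hSK
  set W : Finset ℤ := Finset.Icc (n - NA - NC) NB with hW
  set SM : Finset ℤ := Finset.Icc (n - NC) (NA + NB) with hSM
  have hLpos : (NA + NB + NC - n : ℤ) < (L : ℤ) := by simp only [hLdef]; push_cast; omega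
  have hAB : ∀ m, NA + NB < m → (A * B).coeff m = 0 := coeff_mul_bound hNA hNB
  have hsm : ∀ m' ∉ SM, (A * B).coeff m' = 0 ∨ m' < n - NC := by
    intro m' hm'
    simp only [hSM, Finset.mem_Icc, not_and, not_le] at hm'
    rcases le_or_gt (n - NC) m' with hc | hc
    · exact Or.inl (hAB m' (hm' hc))
    · exact Or.inr hc
  have hLm : ∀ m' ∈ SM, NC + m' - n < (L : ℤ) := by
    intro m' hm'
    simp only [hSM, Finset.mem_Icc] at hm'
    omega
  rw [coeff_mul (A * B) C n NC hNC SM hsm L hLm]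
  have e2 : ∀ m' ∈ SM, ∀ β ∈ Finset.range L, G (A * B) C n m' β
      = ∑ k ∈ SK, ∑ α ∈ Finset.range L,
          (gbinom k α * gbinom m' β) •
            (A.coeff k * (d^[α] (B.coeff (m' - k + α)) * d^[β] (C.coeff (n - m' + β)))) := by
    intro m' hm' β _
    simp only [hSM, Finset.mem_Icc] at hm'
    have hsk : ∀ k ∉ SK, A.coeff k = 0 ∨ k < m' - NB := by
      intro k hk
      simp only [hSK, Finset.mem_Icc, not_and, not_le] at hk
      rcases le_or_gt (n - NB - NC) k with hc | hc
      · exact Or.inl (hNA k (hk hc))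
      · exact Or.inr (by omega)
    have hLk : ∀ k ∈ SK, NB + k - m' < (L : ℤ) := by
      intro k hk
      simp only [hSK, Finset.mem_Icc] at hk
      omega
    rw [G, coeff_mul A B m' NB hNB SK hsk L hLk, Finset.sum_mul]
    refine Finset.sum_congr rfl fun k _ => ?_
    rw [Finset.sum_mul]
    refine Finset.sum_congr rfl fun α _ => ?_
    rw [G]
    exact rearr _ _ _ _ _
  rw [Finset.sum_congr rfl (fun m' hm' => Finset.sum_congr rfl (fun β hβ => e2 m' hm' β hβ))]
  rw [sum_perm4 SM (Finset.range L) SK (Finset.range L)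
    (fun m' β k α => (gbinom k α * gbinom m' β) •
      (A.coeff k * (d^[α] (B.coeff (m' - k + α)) * d^[β] (C.coeff (n - m' + β)))))]
  -- now: ∑ k ∑ α ∑ β<L ∑ m' ∈ SM
  -- translate m' → w, then rewrite to canonical, then pad β
  have main : ∀ k ∈ SK, ∀ α ∈ Finset.range L, ∀ β ∈ Finset.range L,
      (∑ m' ∈ SM, (gbinom k α * gbinom m' β) •
        (A.coeff k * (d^[α] (B.coeff (m' - k + α)) * d^[β] (C.coeff (n - m' + β)))))
      = ∑ w ∈ W, (gbinom k α * gbinom (k + w - α) β) • Vterm A B C n k w α β := by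
    intro k hk α _ β _
    simp only [hSK, Finset.mem_Icc] at hk
    have htr := sumTranslate W SM (k - (α:ℤ))
      (fun m' => (gbinom k α * gbinom m' β) •
        (A.coeff k * (d^[α] (B.coeff (m' - k + α)) * d^[β] (C.coeff (n - m' + β)))))
      (by -- h1 : ∀ m' ∈ SM, m' - (k - α) ∉ W → term m' = 0
        intro m' hm' hnw
        simp only [hSM, Finset.mem_Icc] at hm'
        simp only [hW, Finset.mem_Icc, not_and, not_le] at hnw
        rcases le_or_gt (n - NA - NC) (m' - (k - (α:ℤ))) with hc | hc
        · have hb : NB < m' - k + (α:ℤ) := by have := hnw hc; omega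
          simp only [hNB _ hb, iterD_zero, zero_mul, mul_zero, smul_zero]
        · have hcc : NC < n - m' + (β:ℤ) := by omega
          simp only [hNC _ hcc, iterD_zero, mul_zero, mul_zero, smul_zero])
      (by -- h2 : ∀ w ∈ W, w + (k - α) ∉ SM → term (w + (k-α)) = 0
        intro w hw hnm
        simp only [hW, Finset.mem_Icc] at hw
        simp only [hSM, Finset.mem_Icc, not_and, not_le] at hnm
        rcases le_or_gt (n - NC) (w + (k - (α:ℤ))) with hc | hc
        · exfalso; have := hnm hc; omega
        · have hcc : NC < n - (w + (k - (α:ℤ))) + (β:ℤ) := by omega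
          simp only [hNC _ hcc, iterD_zero, mul_zero, mul_zero, smul_zero])
    rw [← htr]
    refine Finset.sum_congr rfl fun w hw => ?_
    beta_reduce
    have e1 : w + (k - (α:ℤ)) - k + (α:ℤ) = w := by omega
    have e2' : n - (w + (k - (α:ℤ))) + (β:ℤ) = n - k - w + (α:ℤ) + (β:ℤ) := by omega
    have e3 : w + (k - (α:ℤ)) = k + w - (α:ℤ) := by omega
    rw [e1, e2', e3, Vterm]
  rw [Finset.sum_congr rfl (fun k hk => Finset.sum_congr rfl (fun α hα =>
    Finset.sum_congr rfl (fun β hβ => main k hk α hα β hβ)))]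
  -- pad β from range L to range (2*L)
  refine Finset.sum_congr rfl fun k hk => Finset.sum_congr rfl fun α _ => ?_
  simp only [hSK, Finset.mem_Icc] at hk
  refine Finset.sum_subset (Finset.range_subset_range.2 (by omega)) ?_
  intro β _ hβ
  simp only [Finset.mem_range, not_lt] at hβ
  refine Finset.sum_eq_zero fun w hw => ?_
  simp only [hW, Finset.mem_Icc] at hw
  rw [Vterm_zero_C (hNC _ (by omega)), smul_zero]

end PDO

end Kit4

section Kit5

namespace PDO

set_option linter.unusedSectionVars false
set_option maxHeartbeats 3200000

variable {R : Type} [CommRing R] [Algebra ℚ R] {d : R →+ R}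

theorem coeff_assoc_right (hd : Leibniz d) (A B C : PDO R d) (n NA NB NC : ℤ)
    (hNA : ∀ m, NA < m → A.coeff m = 0)
    (hNB : ∀ m, NB < m → B.coeff m = 0)
    (hNC : ∀ m, NC < m → C.coeff m = 0) :
    (A * (B * C)).coeff n
      = ∑ k ∈ Finset.Icc (n - NB - NC) NA, ∑ α ∈ Finset.range ((NA+NB+NC-n).toNat + 1),
        ∑ β ∈ Finset.range (2*((NA+NB+NC-n).toNat + 1)), ∑ w ∈ Finset.Icc (n - NA - NC) NB,
          (gbinom k α * gbinom (k + w - α) β) • Vterm A B C n k w α β := by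
  set L : ℕ := (NA+NB+NC-n).toNat + 1 with hLdef
  set SK : Finset ℤ := Finset.Icc (n - NB - NC) NA with hSK
  set W : Finset ℤ := Finset.Icc (n - NA - NC) NB with hW
  have hLpos : (NA + NB + NC - n : ℤ) < (L : ℤ) := by simp only [hLdef]; push_cast; omega
  have hBC : ∀ m, NB + NC < m → (B * C).coeff m = 0 := coeff_mul_bound hNB hNC
  have hsk : ∀ k ∉ SK, A.coeff k = 0 ∨ k < n - (NB + NC) := by
    intro k hk
    simp only [hSK, Finset.mem_Icc, not_and, not_le] at hk
    rcases le_or_gt (n - NB - NC) k with hc | hc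
    · exact Or.inl (hNA k (hk hc))
    · exact Or.inr (by omega)
  have hLk : ∀ k ∈ SK, (NB + NC) + k - n < (L : ℤ) := by
    intro k hk
    simp only [hSK, Finset.mem_Icc] at hk
    omega
  rw [coeff_mul A (B * C) n (NB + NC) hBC SK hsk L hLk]
  -- step 2 : expand each G A (B*C) n k t
  have e2 : ∀ k ∈ SK, ∀ t ∈ Finset.range L, G A (B * C) n k t
      = ∑ p ∈ W, ∑ s ∈ Finset.range L, ∑ i ∈ Finset.range (t+1),
          (gbinom k t * (gbinom p s * ((t.choose i : ℚ)))) •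
            (A.coeff k * (d^[i] (B.coeff p) * d^[t - i + s] (C.coeff (n - k + ↑t - p + ↑s)))) := by
    intro k hk t _
    simp only [hSK, Finset.mem_Icc] at hk
    have hsp : ∀ p ∉ W, B.coeff p = 0 ∨ p < (n - k + (t:ℤ)) - NC := by
      intro p hp
      simp only [hW, Finset.mem_Icc, not_and, not_le] at hp
      rcases le_or_gt (n - NA - NC) p with hc | hc
      · exact Or.inl (hNB p (hp hc))
      · exact Or.inr (by omega)
    have hLs : ∀ p ∈ W, NC + p - (n - k + (t:ℤ)) < (L : ℤ) := by
      intro p hp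
      simp only [hW, Finset.mem_Icc] at hp
      omega
    rw [G, coeff_mul B C (n - k + ↑t) NC hNC W hsp L hLs]
    rw [iterD_sum, Finset.smul_sum, Finset.mul_sum]
    refine Finset.sum_congr rfl fun p _ => ?_
    rw [iterD_sum, Finset.smul_sum, Finset.mul_sum]
    refine Finset.sum_congr rfl fun s _ => ?_
    rw [G, mul_smul_comm (gbinom p s), iterD_smul, iterD_mul hd]
    rw [Finset.smul_sum, Finset.smul_sum, Finset.mul_sum]
    refine Finset.sum_congr rfl fun i _ => ?_
    rw [← Function.iterate_add_apply]
    exact rearr2 _ _ _ _ _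
  rw [Finset.sum_congr rfl (fun k hk => Finset.sum_congr rfl (fun t ht => e2 k hk t ht))]
  -- reorder and per-(k,p) triangle
  refine Finset.sum_congr rfl fun k hk => ?_
  simp only [hSK, Finset.mem_Icc] at hk
  -- swap t and p
  rw [Finset.sum_comm]
  -- now ∑ p ∈ W, ∑ t < L, ∑ s < L, ∑ i < t+1
  have core : ∀ p ∈ W,
      (∑ t ∈ Finset.range L, ∑ s ∈ Finset.range L, ∑ i ∈ Finset.range (t+1),
        (gbinom k t * (gbinom p s * ((t.choose i : ℚ)))) •
          (A.coeff k * (d^[i] (B.coeff p) * d^[t - i + s] (C.coeff (n - k + ↑t - p + ↑s)))))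
      = ∑ α ∈ Finset.range L, ∑ β ∈ Finset.range (2*L),
          (gbinom k α * gbinom (k + p - α) β) • Vterm A B C n k p α β := by
    intro p hp
    simp only [hW, Finset.mem_Icc] at hp
    -- swap s and i (inside t)
    have sw : ∀ t ∈ Finset.range L,
        (∑ s ∈ Finset.range L, ∑ i ∈ Finset.range (t+1),
          (gbinom k t * (gbinom p s * ((t.choose i : ℚ)))) •
            (A.coeff k * (d^[i] (B.coeff p) * d^[t - i + s] (C.coeff (n - k + ↑t - p + ↑s)))))
        = ∑ i ∈ Finset.range (t+1), ∑ s ∈ Finset.range L,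
          (gbinom k t * (gbinom p s * ((t.choose i : ℚ)))) •
            (A.coeff k * (d^[i] (B.coeff p) * d^[t - i + s] (C.coeff (n - k + ↑t - p + ↑s)))) :=
      fun t _ => Finset.sum_comm
    rw [Finset.sum_congr rfl sw]
    -- triangle reindex on (t, i)
    set g : ℕ → ℕ → R := fun α j => ∑ s ∈ Finset.range L,
        (gbinom k (α + j) * (gbinom p s * (((α + j).choose α : ℚ)))) •
          (A.coeff k * (d^[α] (B.coeff p) * d^[j + s] (C.coeff (n - k + ↑(α + j) - p + ↑s))))
      with hg
    have e4 : (∑ t ∈ Finset.range L, ∑ i ∈ Finset.range (t+1), ∑ s ∈ Finset.range L,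
        (gbinom k t * (gbinom p s * ((t.choose i : ℚ)))) •
          (A.coeff k * (d^[i] (B.coeff p) * d^[t - i + s] (C.coeff (n - k + ↑t - p + ↑s)))))
        = ∑ t ∈ Finset.range L, ∑ i ∈ Finset.range (t+1), g i (t - i) := by
      refine Finset.sum_congr rfl fun t _ => Finset.sum_congr rfl fun i hi => ?_
      simp only [Finset.mem_range] at hi
      rw [hg]
      beta_reduce
      rw [show i + (t - i) = t from by omega]
    rw [e4, sum_triangle L g, Finset.sum_filter, Finset.sum_product]
    -- drop the `if`
    have e5 : ∀ α ∈ Finset.range L, ∀ j ∈ Finset.range L,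
        (if α + j < L then g α j else 0) = g α j := by
      intro α _ j _
      by_cases hc : α + j < L
      · rw [if_pos hc]
      · rw [if_neg hc]
        refine (Finset.sum_eq_zero fun s _ => ?_).symm
        have hcc : NC < n - k + ((α + j : ℕ) : ℤ) - p + (s:ℤ) := by
          push_cast
          omega
        rw [hNC _ hcc, iterD_zero, mul_zero, mul_zero, smul_zero]
    rw [Finset.sum_congr rfl (fun α hα => Finset.sum_congr rfl (fun j hj => e5 α hα j hj))]
    -- now per α : combine (j, s) → (β, u)
    refine Finset.sum_congr rfl fun α hα => ?_
    simp only [Finset.mem_range] at hα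
    -- expand g and pad the rectangle to (2L)×(2L) with an `if`
    set F : ℕ → ℕ → R := fun j s =>
        (gbinom k (α + j) * (gbinom p s * (((α + j).choose α : ℚ)))) •
          (A.coeff k * (d^[α] (B.coeff p) * d^[j + s] (C.coeff (n - k + ↑(α + j) - p + ↑s))))
      with hF
    have hFzero : ∀ j s : ℕ, (L : ℕ) ≤ j + s → F j s = 0 := by
      intro j s hjs
      rw [hF]
      beta_reduce
      have hcc : NC < n - k + ((α + j : ℕ) : ℤ) - p + (s:ℤ) := by push_cast; omega
      rw [hNC _ hcc, iterD_zero, mul_zero, mul_zero, smul_zero]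
    have e6 : g α = fun j => ∑ s ∈ Finset.range L, F j s := by
      funext j
      rw [hg]
    have e7 : (∑ j ∈ Finset.range L, ∑ s ∈ Finset.range L, F j s)
        = ∑ j ∈ Finset.range (2*L), ∑ s ∈ Finset.range (2*L),
            (if j + s < 2*L then F j s else 0) := by
      have inner : ∀ j ∈ Finset.range L,
          (∑ s ∈ Finset.range L, F j s)
          = ∑ s ∈ Finset.range (2*L), (if j + s < 2*L then F j s else 0) := by
        intro j hj
        simp only [Finset.mem_range] at hj
        have step1 : (∑ s ∈ Finset.range L, F j s)
            = ∑ s ∈ Finset.range L, (if j + s < 2*L then F j s else 0) := by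
          refine Finset.sum_congr rfl fun s hs => ?_
          simp only [Finset.mem_range] at hs
          rw [if_pos (by omega)]
        rw [step1]
        refine Finset.sum_subset (Finset.range_subset_range.2 (by omega)) ?_
        intro s _ hs
        simp only [Finset.mem_range, not_lt] at hs
        by_cases hc : j + s < 2*L
        · rw [if_pos hc]; exact hFzero j s (by omega)
        · rw [if_neg hc]
      rw [Finset.sum_congr rfl inner]
      refine Finset.sum_subset (Finset.range_subset_range.2 (by omega)) ?_
      intro j _ hj
      simp only [Finset.mem_range, not_lt] at hj
      refine Finset.sum_eq_zero fun s _ => ?_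
      by_cases hc : j + s < 2*L
      · rw [if_pos hc]; exact hFzero j s (by omega)
      · rw [if_neg hc]
    rw [e6]
    beta_reduce
    rw [e7, ← Finset.sum_product', ← Finset.sum_filter, ← sum_triangle (2*L) F]
    -- now ∑ β < 2L, ∑ u ≤ β, F u (β - u); collapse inner sum
    refine Finset.sum_congr rfl fun β _ => ?_
    have e8 : ∀ u ∈ Finset.range (β + 1),
        F u (β - u) = (gbinom k (α + u) * (gbinom p (β - u) * (((α + u).choose α : ℚ)))) •
          Vterm A B C n k p α β := by
      intro u hu
      simp only [Finset.mem_range] at hu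
      rw [hF]
      beta_reduce
      rw [show u + (β - u) = β from by omega,
        show n - k + ((α + u : ℕ) : ℤ) - p + ((β - u : ℕ) : ℤ) = n - k - p + (α:ℤ) + (β:ℤ)
          from by omega, Vterm]
    rw [Finset.sum_congr rfl e8, ← Finset.sum_smul]
    congr 1
    -- scalar identity
    have e9 : ∀ u ∈ Finset.range (β + 1),
        gbinom k (α + u) * (gbinom p (β - u) * (((α + u).choose α : ℚ)))
        = gbinom k α * (gbinom (k - α) u * gbinom p (β - u)) := by
      intro u _
      have := gbinom_split k α u
      calc gbinom k (α + u) * (gbinom p (β - u) * (((α + u).choose α : ℚ)))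
          = (gbinom k (α + u) * ((α + u).choose α : ℚ)) * gbinom p (β - u) := by ring
        _ = (gbinom k α * gbinom (k - α) u) * gbinom p (β - u) := by rw [this]
        _ = gbinom k α * (gbinom (k - α) u * gbinom p (β - u)) := by ring
    rw [Finset.sum_congr rfl e9, ← Finset.mul_sum, gbinom_vandermonde (k - α) p β,
      show k - (α:ℤ) + p = k + p - (α:ℤ) from by omega]
  rw [Finset.sum_congr rfl core]
  -- reorder p, α, β → α, β, p
  rw [Finset.sum_comm]
  refine Finset.sum_congr rfl fun α _ => Finset.sum_comm

end PDO

end Kit5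

section Kit6

namespace PDO

set_option linter.unusedSectionVars false
set_option maxHeartbeats 1600000

variable {R : Type} [CommRing R] [Algebra ℚ R] {d : R →+ R}

theorem mul_assoc' (hd : Leibniz d) (A B C : PDO R d) : A * B * C = A * (B * C) := by
  refine ext' (funext fun n => ?_)
  obtain ⟨NA, hNA⟩ := A.bdd
  obtain ⟨NB, hNB⟩ := B.bdd
  obtain ⟨NC, hNC⟩ := C.bdd
  rw [coeff_assoc_left A B C n NA NB NC hNA hNB hNC,
    coeff_assoc_right hd A B C n NA NB NC hNA hNB hNC]

theorem smul_sub' (q : ℚ) (A B : PDO R d) : q • (A - B) = q • A - q • B :=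
  ext' (funext fun n => by
    rw [coeff_smul, coeff_sub, coeff_sub, coeff_smul, coeff_smul, smul_sub])

theorem iterD_comm {D : R →+ R} (hDd : ∀ r : R, D (d r) = d (D r)) (j : ℕ) (x : R) :
    D (d^[j] x) = d^[j] (D x) := by
  induction j generalizing x with
  | zero => rfl
  | succ j ih => rw [Function.iterate_succ_apply, ih, hDd, ← Function.iterate_succ_apply]

theorem mapHom_one {D : R →+ R} (hD : Leibniz D) : mapHom D (1 : PDO R d) = 0 := by
  refine ext' (funext fun n => ?_)
  show D ((1 : PDO R d).coeff n) = 0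
  rw [coeff_one]
  by_cases hn : n = 0
  · rw [if_pos hn]; exact d_one hD
  · rw [if_neg hn]; exact map_zero D

theorem mapHom_mul {D : R →+ R} (hD : Leibniz D) (hDd : ∀ r : R, D (d r) = d (D r))
    (A B : PDO R d) :
    mapHom D (A * B) = mapHom D A * B + A * mapHom D B := by
  refine ext' (funext fun n => ?_)
  obtain ⟨NA, hNA⟩ := A.bdd
  obtain ⟨NB, hNB⟩ := B.bdd
  have hNA' : ∀ m, NA < m → (mapHom D A).coeff m = 0 := fun m hm => by
    show D (A.coeff m) = 0; rw [hNA m hm, map_zero]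
  have hNB' : ∀ m, NB < m → (mapHom D B).coeff m = 0 := fun m hm => by
    show D (B.coeff m) = 0; rw [hNB m hm, map_zero]
  set s : Finset ℤ := Finset.Icc (n - NB) NA with hs
  have hsc : ∀ k ∉ s, A.coeff k = 0 ∨ k < n - NB := by
    intro k hk
    simp only [hs, Finset.mem_Icc, not_and, not_le] at hk
    rcases le_or_gt (n - NB) k with hc | hc
    · exact Or.inl (hNA k (hk hc))
    · exact Or.inr hc
  have hsc' : ∀ k ∉ s, (mapHom D A).coeff k = 0 ∨ k < n - NB := by
    intro k hk
    rcases hsc k hk with hc | hc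
    · exact Or.inl (by show D (A.coeff k) = 0; rw [hc, map_zero])
    · exact Or.inr hc
  set L : ℕ := (NA + NB - n).toNat + 1 with hLdef
  have hL : ∀ k ∈ s, NB + k - n < (L : ℤ) := by
    intro k hk
    simp only [hs, Finset.mem_Icc] at hk
    simp only [hLdef]
    push_cast
    omega
  have lhs : (mapHom D (A * B)).coeff n = D ((A * B).coeff n) := rfl
  rw [coeff_add, lhs, coeff_mul A B n NB hNB s hsc L hL,
    coeff_mul (mapHom D A) B n NB hNB s hsc' L hL,
    coeff_mul A (mapHom D B) n NB hNB' s hsc L hL,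
    map_sum, ← Finset.sum_add_distrib]
  refine Finset.sum_congr rfl fun k _ => ?_
  rw [map_sum, ← Finset.sum_add_distrib]
  refine Finset.sum_congr rfl fun l _ => ?_
  rw [G, G, G, hD]
  have e1 : (mapHom D A).coeff k = D (A.coeff k) := rfl
  have e2 : (mapHom D B).coeff (n - k + l) = D (B.coeff (n - k + l)) := rfl
  rw [e1, e2, map_rat_smul, iterD_comm hDd]
  ring

theorem pow_def (A : PDO R d) (m : ℕ) : A ^ m = A.npow m := rfl

theorem hdel_pow (hd : Leibniz d) {h : Rˣ} (hdh : d (h : R) = 0) (m : ℕ) :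
    (hdel h : PDO R d) ^ m = mono ((h : R) ^ m) m := by
  induction m with
  | zero =>
    show (1 : PDO R d) = mono ((h:R)^0) 0
    rw [pow_zero]
    rfl
  | succ m ih =>
    show (hdel h : PDO R d).npow m * hdel h = mono ((h : R) ^ (m+1)) (m+1)
    have ih' : (hdel h : PDO R d).npow m = mono ((h : R) ^ m) m := ih
    rw [ih']
    show (mono ((h:R)^m) m : PDO R d) * mono (h : R) 1 = mono ((h : R) ^ (m+1)) (m+1)
    rw [mono_mul_mono hdh, ← pow_succ]

theorem Lop_eq (h : Rˣ) : (Lop h 0 : PDO R d) = mono ((h : R) ^ 2) 2 := by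
  refine ext' (funext fun n => ?_)
  show (if n = 2 then (h : R) ^ 2 else if n = 0 then 2 * 0 else 0) = if n = 2 then (h:R)^2 else 0
  by_cases hn : n = 2
  · rw [if_pos hn, if_pos hn]
  · rw [if_neg hn, if_neg hn]
    by_cases hn0 : n = 0
    · rw [if_pos hn0, mul_zero]
    · rw [if_neg hn0]

theorem negp_eq (A : PDO R d) : negp A = A - pos A := by
  refine ext' (funext fun n => ?_)
  rw [coeff_sub]
  show (if n < 0 then A.coeff n else 0) = A.coeff n - (if 0 ≤ n then A.coeff n else 0)
  by_cases hn : 0 ≤ n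
  · rw [if_pos hn, if_neg (by omega), sub_self]
  · rw [if_neg hn, if_pos (by omega), sub_zero]

theorem mapHom_Lop {D : R →+ R} (hD : Leibniz D) {h : Rˣ} (hDh : D (h : R) = 0) :
    mapHom D (Lop h 0 : PDO R d) = 0 := by
  refine ext' (funext fun n => ?_)
  show D ((Lop h 0 : PDO R d).coeff n) = 0
  show D (if n = 2 then (h : R) ^ 2 else if n = 0 then 2 * 0 else 0) = 0
  by_cases hn : n = 2
  · rw [if_pos hn]
    exact d_pow_eq_zero hD hDh 2
  · rw [if_neg hn]
    by_cases hn0 : n = 0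
    · rw [if_pos hn0, mul_zero, map_zero]
    · rw [if_neg hn0, map_zero]

theorem conj_mul (hd : Leibniz d) {P Pinv : PDO R d} (hvu : Pinv * P = 1) (Y Z : PDO R d) :
    ((P * Y) * Pinv) * ((P * Z) * Pinv) = (P * (Y * Z)) * Pinv := by
  have e1 : Pinv * ((P * Z) * Pinv) = Z * Pinv := by
    rw [← mul_assoc' hd Pinv (P * Z) Pinv, ← mul_assoc' hd Pinv P Z, hvu, one_mul']
  rw [mul_assoc' hd (P * Y) Pinv ((P * Z) * Pinv), e1, ← mul_assoc' hd (P * Y) Z Pinv,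
    mul_assoc' hd P Y Z]

end PDO

end Kit6


/-- Sato–Wilson implies Lax: if `P₊ = 1` satisfies `D(P) = −(aₙ/h)(P(h∂)^(2n+1)P⁻¹)₋ P`
and `L := P·h²∂²·P⁻¹` satisfies `L₋ = 0`, then with `𝔏 := P(h∂)^(2n+1)P⁻¹` one has
`D(L) = (aₙ/h)[𝔏₊, L]`. -/
theorem sato_wilson_implies_lax
    (R : Type) [CommRing R] [Algebra ℚ R] (d : R →+ R)
    (hd : Leibniz d) (h : Rˣ) (hdh : d (h : R) = 0)
    (D : R →+ R) (hD : Leibniz D) (hDd : ∀ r : R, D (d r) = d (D r)) (hDh : D (h : R) = 0)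
    (n : ℕ) (P Pinv : PDO R d) (hP : PDO.pos P = 1)
    (hPinv : P * Pinv = 1 ∧ Pinv * P = 1)
    (hSW : PDO.mapHom D P
      = -(kdvA n • (PDO.const ((h⁻¹ : Rˣ) : R)
          * (PDO.negp (P * PDO.hdel h ^ (2 * n + 1) * Pinv) * P))))
    (hL : PDO.negp (P * PDO.Lop h 0 * Pinv) = 0) :
    PDO.mapHom D (P * PDO.Lop h 0 * Pinv)
      = kdvA n • (PDO.const ((h⁻¹ : Rˣ) : R)
          * PDO.comm (PDO.pos (P * PDO.hdel h ^ (2 * n + 1) * Pinv)) (P * PDO.Lop h 0 * Pinv)) := by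
  classical
  obtain ⟨huv, hvu⟩ := hPinv
  set X : PDO R d := PDO.hdel h ^ (2 * n + 1) with hX
  set M : PDO R d := PDO.Lop h 0 with hM
  set c : ℚ := kdvA n with hc
  set e : PDO R d := PDO.const ((h⁻¹ : Rˣ) : R) with he
  -- basic facts
  have hinv : d ((h⁻¹ : Rˣ) : R) = 0 := by
    have h2 := hd (h : R) ((h⁻¹ : Rˣ) : R)
    rw [Units.mul_inv, PDO.d_one hd, hdh, mul_zero, add_zero] at h2
    calc d ((h⁻¹ : Rˣ) : R)
        = (((h⁻¹:Rˣ):R) * (h:R)) * d ((h⁻¹:Rˣ):R) := by rw [Units.inv_mul, one_mul]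
      _ = ((h⁻¹:Rˣ):R) * ((h:R) * d ((h⁻¹:Rˣ):R)) := by rw [mul_assoc]
      _ = 0 := by rw [← h2, mul_zero]
  have hcomm_const : ∀ A : PDO R d, A * e = e * A := fun A => PDO.mul_const_comm hinv A
  have hDM : PDO.mapHom D M = 0 := PDO.mapHom_Lop hD hDh
  have st1 : PDO.mapHom D (P * Pinv) = 0 := by rw [huv]; exact PDO.mapHom_one hD
  have st2 : PDO.mapHom D P * Pinv + P * PDO.mapHom D Pinv = 0 := by
    rw [← PDO.mapHom_mul hD hDd P Pinv]; exact st1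
  have st3 : P * PDO.mapHom D Pinv = -(PDO.mapHom D P * Pinv) :=
    eq_neg_of_add_eq_zero_right st2
  have st4 : PDO.mapHom D Pinv = -(Pinv * (PDO.mapHom D P * Pinv)) := by
    calc PDO.mapHom D Pinv = 1 * PDO.mapHom D Pinv := (PDO.one_mul' _).symm
      _ = (Pinv * P) * PDO.mapHom D Pinv := by rw [hvu]
      _ = Pinv * (P * PDO.mapHom D Pinv) := PDO.mul_assoc' hd _ _ _
      _ = Pinv * (-(PDO.mapHom D P * Pinv)) := by rw [st3]
      _ = -(Pinv * (PDO.mapHom D P * Pinv)) := PDO.mul_neg' _ _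
  have st5 : PDO.mapHom D P * Pinv = -(c • (e * PDO.negp (P * X * Pinv))) := by
    rw [hSW, PDO.neg_mul', PDO.smul_mul']
    have e5 : (e * (PDO.negp (P * X * Pinv) * P)) * Pinv = e * PDO.negp (P * X * Pinv) := by
      rw [PDO.mul_assoc' hd e (PDO.negp (P * X * Pinv) * P) Pinv,
        PDO.mul_assoc' hd (PDO.negp (P * X * Pinv)) P Pinv, huv, PDO.mul_one' hd]
    rw [e5]
  -- the Lax-type computation
  have stP1 : Pinv * ((P * M) * Pinv) = M * Pinv := by
    rw [← PDO.mul_assoc' hd Pinv (P * M) Pinv, ← PDO.mul_assoc' hd Pinv P M, hvu,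
      PDO.one_mul']
  have stA : (PDO.mapHom D P * Pinv) * (P * M * Pinv) = (PDO.mapHom D P * M) * Pinv := by
    rw [PDO.mul_assoc' hd (PDO.mapHom D P) Pinv (P * M * Pinv)]
    rw [show P * M * Pinv = (P * M) * Pinv from rfl, stP1,
      ← PDO.mul_assoc' hd (PDO.mapHom D P) M Pinv]
  have stB : (P * M) * PDO.mapHom D Pinv = -((P * M * Pinv) * (PDO.mapHom D P * Pinv)) := by
    rw [st4, PDO.mul_neg']
    rw [← PDO.mul_assoc' hd (P * M) Pinv (PDO.mapHom D P * Pinv)]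
  have stDL : PDO.mapHom D (P * M * Pinv)
      = (PDO.mapHom D P * Pinv) * (P * M * Pinv) - (P * M * Pinv) * (PDO.mapHom D P * Pinv) := by
    rw [show P * M * Pinv = (P * M) * Pinv from rfl, PDO.mapHom_mul hD hDd (P * M) Pinv,
      PDO.mapHom_mul hD hDd P M, hDM, PDO.mul_zero', add_zero]
    rw [show (PDO.mapHom D P * M) * Pinv = (PDO.mapHom D P * Pinv) * ((P * M) * Pinv) from stA.symm,
      show (P * M) * PDO.mapHom D Pinv = -(((P * M) * Pinv) * (PDO.mapHom D P * Pinv)) from stB]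
    rw [sub_eq_add_neg]
  -- commutation of L and 𝔏
  have hXM : M * X = X * M := by
    rw [hM, hX, PDO.Lop_eq, PDO.hdel_pow hd hdh,
      PDO.mono_mul_mono (PDO.d_pow_eq_zero hd hdh (2*n+1)) ((h:R)^2) 2 ((2*n+1 : ℕ) : ℤ),
      PDO.mono_mul_mono (PDO.d_pow_eq_zero hd hdh 2) ((h:R)^(2*n+1)) ((2*n+1 : ℕ) : ℤ) 2,
      mul_comm ((h:R)^2) ((h:R)^(2*n+1)), add_comm (2:ℤ) ((2*n+1 : ℕ) : ℤ)]
  have hLG : (P * M * Pinv) * (P * X * Pinv) = (P * X * Pinv) * (P * M * Pinv) := by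
    rw [show P * M * Pinv = (P * M) * Pinv from rfl, show P * X * Pinv = (P * X) * Pinv from rfl,
      PDO.conj_mul hd hvu M X, PDO.conj_mul hd hvu X M, hXM]
  -- final computation
  set Gl : PDO R d := P * X * Pinv with hGl
  set Lp : PDO R d := P * M * Pinv with hLp
  have key : Lp * PDO.negp Gl - PDO.negp Gl * Lp = PDO.pos Gl * Lp - Lp * PDO.pos Gl := by
    rw [PDO.negp_eq Gl, PDO.mul_sub', PDO.sub_mul', hLG]
    abel
  calc PDO.mapHom D Lp
      = (PDO.mapHom D P * Pinv) * Lp - Lp * (PDO.mapHom D P * Pinv) := stDL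
    _ = (-(c • (e * PDO.negp Gl))) * Lp - Lp * (-(c • (e * PDO.negp Gl))) := by rw [st5]
    _ = -(c • ((e * PDO.negp Gl) * Lp)) - (-(c • (Lp * (e * PDO.negp Gl)))) := by
        rw [PDO.neg_mul', PDO.smul_mul', PDO.mul_neg', PDO.mul_smul']
    _ = c • (Lp * (e * PDO.negp Gl)) - c • ((e * PDO.negp Gl) * Lp) := by abel
    _ = c • (Lp * (e * PDO.negp Gl) - (e * PDO.negp Gl) * Lp) := (PDO.smul_sub' _ _ _).symm
    _ = c • (e * (Lp * PDO.negp Gl) - e * (PDO.negp Gl * Lp)) := by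
        rw [← PDO.mul_assoc' hd Lp e (PDO.negp Gl), hcomm_const Lp,
          PDO.mul_assoc' hd e Lp (PDO.negp Gl), PDO.mul_assoc' hd e (PDO.negp Gl) Lp]
    _ = c • (e * (Lp * PDO.negp Gl - PDO.negp Gl * Lp)) := by rw [PDO.mul_sub']
    _ = c • (e * (PDO.pos Gl * Lp - Lp * PDO.pos Gl)) := by rw [key]
    _ = kdvA n • (PDO.const ((h⁻¹ : Rˣ) : R) * PDO.comm (PDO.pos Gl) Lp) := by
        rw [PDO.comm]
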